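/- arXiv:2102.12251 — 2 statements merged into one kernel-verified Lean document; each statement's English description precedes it below -/
import Mathlib

section
/- For m ∈ ℤ, p ∈ (1/2)ℤ, the operators on W = ℂ[x] ⊕ ℂ[y] satisfy the commutator relation [L_m, G_p] f = (m/2 − p) G_{m+p} f for all f ∈ ℂ[x], where L_m f(x) = λ^m(x + mα) f(x+m), L_m g(y) = λ^m(y + m(α + 1/2)) g(y+m), and G_p is defined as above. -/
open Polynomial

/- Half-integers `p ∈ (1/2)ℤ` are encoded by their doubles `a = 2p ∈ ℤ`; `λ^p = ν^a`
for a fixed square root `ν` of `λ` (so `λ = ν²`), `t^{2p} = t^a`. -/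

/-- `L_m` acting on `ℂ[x]` by `f ↦ λ^m (x + m β) f(x + m)`; on the even part the
parameter is `β = α`, on the odd part `β = α + 1/2`. -/
noncomputable def Lw (nu β : ℂ) (m : ℤ) (f : Polynomial ℂ) : Polynomial ℂ :=
  (nu ^ 2) ^ m • ((X + C ((m : ℂ) * β)) * f.comp (X + C (m : ℂ)))

/-- `G_p : ℂ[x] → ℂ[y]`, `G_p f(x) = t^{2p} λ^p f(y + p)`. -/
noncomputable def Geo (t nu : ℂ) (a : ℤ) (f : Polynomial ℂ) : Polynomial ℂ :=
  (t ^ a * nu ^ a) • f.comp (X + C ((a : ℂ) / 2))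

/-- `[L_m, G_p] f = (m/2 − p) G_{m+p} f` for `f ∈ ℂ[x]`. -/
theorem stmt6 (t nu α : ℂ) (ht : t = 1 ∨ t = -1) (hnu : nu ≠ 0)
    (m a : ℤ) (f : Polynomial ℂ) :
    Lw nu (α + 1/2) m (Geo t nu a f) - Geo t nu a (Lw nu α m f)
      = ((m : ℂ) / 2 - (a : ℂ) / 2) • Geo t nu (a + 2 * m) f := by
  have ht0 : t ≠ 0 := by rcases ht with h | h <;> simp [h]
  have h2 : ((-1 : ℂ)) ^ (2 : ℤ) = 1 := by norm_num
  have htm : t ^ (a + 2 * m) = t ^ a := by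
    rw [zpow_add₀ ht0, zpow_mul]
    rcases ht with h | h <;> simp [h, h2]
  have hnm : nu ^ (a + 2 * m) = nu ^ a * (nu ^ 2) ^ m := by
    rw [zpow_add₀ hnu, zpow_mul]
    rfl
  simp only [Lw, Geo, htm, hnm, smul_comp, mul_comp, add_comp, X_comp, C_comp,
    Polynomial.comp_assoc, smul_mul_assoc, mul_smul_comm, smul_smul, Polynomial.smul_comp]
  have e1 : X + C ((m : ℂ)) + C ((a:ℂ)/2) = X + C ((m:ℂ) + (a:ℂ)/2) := by
    rw [add_assoc, ← C_add]
  have e2 : X + C ((a:ℂ)/2) + C ((m : ℂ)) = X + C ((m:ℂ) + (a:ℂ)/2) := by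
    rw [add_assoc, ← C_add, add_comm ((a:ℂ)/2)]
  have e3 : X + C (((a + 2*m : ℤ) : ℂ)/2) = X + C ((m:ℂ) + (a:ℂ)/2) := by
    push_cast; ring_nf
  rw [e1, e2, e3, mul_comm ((nu^2)^m) (t^a*nu^a), ← smul_sub, ← sub_mul]
  have e4 : (X + C ((m:ℂ)*(α+1/2))) - (X + C ((a:ℂ)/2) + C ((m:ℂ)*α))
      = C ((m:ℂ)/2 - (a:ℂ)/2) := by
    rw [add_assoc, ← C_add, add_sub_add_left_eq_sub, ← C_sub]
    congr 1; ring
  rw [e4, ← smul_eq_C_mul, smul_smul]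
  congr 1; ring
end

section
/- For r ∈ 1/2 + ℤ and p ∈ (1/2)ℤ, the operators on W = ℂ[x] ⊕ ℂ[y] satisfy [I_r, G_p] f = G_{r+p} f for all homogeneous f ∈ W, where I_r f(x) = −2t^{2r}λ^r α f(x+r), I_r g(y) = t^{2r}λ^r(1 − 2α) g(y+r), and G_p is as defined. -/
open Polynomial

/-- `G_p : ℂ[y] → ℂ[x]`, `G_p g(y) = (−t)^{2p} λ^p (x + 2pα) g(x + p)`. -/
noncomputable def Goe (t nu α : ℂ) (a : ℤ) (g : Polynomial ℂ) : Polynomial ℂ :=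
  ((-t) ^ a * nu ^ a) • ((X + C ((a : ℂ) * α)) * g.comp (X + C ((a : ℂ) / 2)))

/-- `I_r` on the even part: `I_r f(x) = −2 t^{2r} λ^r α f(x + r)`. -/
noncomputable def Ie (t nu α : ℂ) (b : ℤ) (f : Polynomial ℂ) : Polynomial ℂ :=
  (-2 * t ^ b * nu ^ b * α) • f.comp (X + C ((b : ℂ) / 2))

/-- `I_r` on the odd part: `I_r g(y) = t^{2r} λ^r (1 − 2α) g(y + r)`. -/
noncomputable def Io (t nu α : ℂ) (b : ℤ) (g : Polynomial ℂ) : Polynomial ℂ :=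
  (t ^ b * nu ^ b * (1 - 2 * α)) • g.comp (X + C ((b : ℂ) / 2))

lemma hcomp (f : Polynomial ℂ) (c d : ℂ) :
    (f.comp (X + C c)).comp (X + C d) = f.comp (X + C (c + d)) := by
  rw [comp_assoc, add_comp, X_comp, C_comp, add_assoc, ← C_add, add_comm d c]

lemma key (c1 c2 c3 d1 d2 d3 : ℂ) (G : Polynomial ℂ)
    (h1 : c1 - c2 = c3) (h2 : c1 * d1 - c2 * d2 = c3 * d3) :
    c1 • ((X + C d1) * G) - c2 • ((X + C d2) * G) = c3 • ((X + C d3) * G) := by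
  have e1 : C c1 - C c2 = C c3 := by rw [← C_sub, h1]
  have e2 : C c1 * C d1 - C c2 * C d2 = C c3 * C d3 := by
    rw [← C_mul, ← C_mul, ← C_mul, ← C_sub, h2]
  simp only [smul_eq_C_mul]
  linear_combination (X * G) * e1 + G * e2

/-- `[I_r, G_p] = G_{r+p}` on both homogeneous parts of `W = ℂ[x] ⊕ ℂ[y]`. -/
theorem stmt7 (t nu α : ℂ) (ht : t = 1 ∨ t = -1) (hnu : nu ≠ 0)
    (a b : ℤ) (hb : Odd b) (f g : Polynomial ℂ) :
    Io t nu α b (Geo t nu a f) - Geo t nu a (Ie t nu α b f) = Geo t nu (a + b) f ∧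
    Ie t nu α b (Goe t nu α a g) - Goe t nu α a (Io t nu α b g)
      = Goe t nu α (a + b) g := by
  have ht0 : t ≠ 0 := by rcases ht with h | h <;> simp [h]
  have hnt0 : -t ≠ 0 := neg_ne_zero.mpr ht0
  have hnt : (-t) ^ b = -t ^ b := hb.neg_zpow t
  have hab : ((a : ℂ)) / 2 + (b : ℂ) / 2 = ((a + b : ℤ) : ℂ) / 2 := by push_cast; ring
  have hba : ((b : ℂ)) / 2 + (a : ℂ) / 2 = ((a + b : ℤ) : ℂ) / 2 := by push_cast; ring
  constructor
  · simp only [Io, Geo, Ie, smul_comp, hcomp, hab, hba, smul_smul]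
    rw [← sub_smul]
    congr 1
    rw [zpow_add₀ ht0, zpow_add₀ hnu]
    ring
  · simp only [Ie, Goe, Io, smul_comp, mul_comp, add_comp, X_comp, C_comp,
      hcomp, hab, hba, mul_smul_comm, smul_smul, add_assoc, ← C_add]
    apply key
    · rw [zpow_add₀ hnt0, zpow_add₀ hnu, hnt]
      ring
    · rw [zpow_add₀ hnt0, zpow_add₀ hnu, hnt]
      push_cast
      ring
end
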